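/- Let ξ > 0, let A ∈ ℝ^{t×h} (rows a₁,…,a_t ∈ ℝ^h), H ∈ ℝ^{t×d} (rows ε₁,…,ε_t ∈ ℝ^d), θ ∈ ℝ^{h×d}, and let Σ be a d×d positive definite matrix. Define V := AᵀA, X := Aθ + H ∈ ℝ^{t×d}, the ridge estimator θ̂ := (V + ξI_h)⁻¹ AᵀX, and S := vec(Aᵀ H) ∈ ℝ^{hd} (equivalently S = ∑_{s=1}^t vec(a_s ε_sᵀ)). Then ‖vec(θ̂ − θ)‖_{Σ⁻¹ ⊗ (V+ξI_h)} ≤ ξ · ‖vec(θ)‖_{Σ⁻¹ ⊗ (V+ξI_h)⁻¹} + ‖S‖_{Σ⁻¹ ⊗ (V+ξI_h)⁻¹}. -/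

import Mathlib

open Matrix Kronecker

/-- Column-stacking vectorization of an `h × d` real matrix, indexed by
`(column, row)` in column-major order. -/
def vecCol {h d : ℕ} (M : Matrix (Fin h) (Fin d) ℝ) : Fin d × Fin h → ℝ :=
  fun p => M p.2 p.1

namespace RidgeAux

variable {ι κ : Type*} [Fintype ι] [Fintype κ] [DecidableEq ι] [DecidableEq κ]

open scoped MatrixOrder

lemma psd_kron {P : Matrix ι ι ℝ} {Q : Matrix κ κ ℝ}
    (hP : P.PosSemidef) (hQ : Q.PosSemidef) : (P ⊗ₖ Q).PosSemidef := by
  exact hP.kronecker hQ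

lemma qf_eq {P : Matrix ι ι ℝ} (hP : P.PosSemidef) (x : ι → ℝ) :
    x ⬝ᵥ P *ᵥ x = (CFC.sqrt P *ᵥ x) ⬝ᵥ (CFC.sqrt P *ᵥ x) := by
  have hsym : (CFC.sqrt P)ᵀ = CFC.sqrt P := by
    have := (Matrix.nonneg_iff_posSemidef.mp (CFC.sqrt_nonneg P)).isHermitian
    rwa [Matrix.IsHermitian, conjTranspose_eq_transpose_of_trivial] at this
  have hv : x ᵥ* CFC.sqrt P = CFC.sqrt P *ᵥ x := by
    rw [← Matrix.vecMul_transpose, hsym]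
  conv_lhs => rw [← CFC.sqrt_mul_sqrt_self P (Matrix.nonneg_iff_posSemidef.mpr hP)]
  rw [← Matrix.mulVec_mulVec, Matrix.dotProduct_mulVec, hv]

lemma sqrt_dot_eq_norm (a : ι → ℝ) :
    Real.sqrt (a ⬝ᵥ a) = ‖(WithLp.equiv 2 (ι → ℝ)).symm a‖ := by
  rw [EuclideanSpace.norm_eq]
  congr 1
  simp [dotProduct, sq, Real.norm_eq_abs, abs_mul_abs_self]

lemma sqrt_qf_add_le {P : Matrix ι ι ℝ} (hP : P.PosSemidef) (x y : ι → ℝ) :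
    Real.sqrt ((x + y) ⬝ᵥ P *ᵥ (x + y))
      ≤ Real.sqrt (x ⬝ᵥ P *ᵥ x) + Real.sqrt (y ⬝ᵥ P *ᵥ y) := by
  rw [qf_eq hP, qf_eq hP, qf_eq hP, Matrix.mulVec_add,
    sqrt_dot_eq_norm, sqrt_dot_eq_norm, sqrt_dot_eq_norm]
  rw [WithLp.equiv_symm_apply, WithLp.toLp_add]
  exact norm_add_le _ _

lemma sqrt_qf_smul (P : Matrix ι ι ℝ) (c : ℝ) (x : ι → ℝ) :
    Real.sqrt ((c • x) ⬝ᵥ P *ᵥ (c • x)) = |c| * Real.sqrt (x ⬝ᵥ P *ᵥ x) := by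
  have h : (c • x) ⬝ᵥ P *ᵥ (c • x) = (c * c) * (x ⬝ᵥ P *ᵥ x) := by
    rw [Matrix.mulVec_smul, smul_dotProduct, dotProduct_smul, smul_eq_mul, smul_eq_mul]
    ring
  rw [h, Real.sqrt_mul (mul_self_nonneg c), Real.sqrt_mul_self_eq_abs]

end RidgeAux

section MatVec

variable {h d : ℕ}

lemma kron_mulVec (P : Matrix (Fin d) (Fin d) ℝ) (Q : Matrix (Fin h) (Fin h) ℝ)
    (M : Matrix (Fin h) (Fin d) ℝ) :
    (P ⊗ₖ Q) *ᵥ vecCol M = vecCol (Q * M * Pᵀ) := by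
  ext ⟨j, i⟩
  simp only [Matrix.mulVec, dotProduct, vecCol, kroneckerMap_apply, Matrix.mul_apply,
    Fintype.sum_prod_type, Matrix.transpose_apply, Finset.sum_mul, Finset.mul_sum]
  refine Finset.sum_congr rfl fun l _ => Finset.sum_congr rfl fun k _ => by ring

lemma dot_trace (A B : Matrix (Fin h) (Fin d) ℝ) :
    vecCol A ⬝ᵥ vecCol B = (Aᵀ * B).trace := by
  simp only [dotProduct, vecCol, Matrix.trace, Matrix.diag, Matrix.mul_apply,
    Matrix.transpose_apply, Fintype.sum_prod_type]

lemma reweight (D : Matrix (Fin d) (Fin d) ℝ) (W : Matrix (Fin h) (Fin h) ℝ)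
    (hWdet : IsUnit W.det) (hWinv : (W⁻¹)ᵀ = W⁻¹) (M : Matrix (Fin h) (Fin d) ℝ) :
    vecCol (W⁻¹ * M) ⬝ᵥ (D ⊗ₖ W) *ᵥ vecCol (W⁻¹ * M)
      = vecCol M ⬝ᵥ (D ⊗ₖ W⁻¹) *ᵥ vecCol M := by
  rw [kron_mulVec, kron_mulVec, ← Matrix.mul_assoc W, Matrix.mul_nonsing_inv _ hWdet,
    Matrix.one_mul, dot_trace, dot_trace, Matrix.transpose_mul, hWinv,
    Matrix.mul_assoc, Matrix.mul_assoc]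

end MatVec

lemma main_bound (t h d : ℕ) (ξ : ℝ) (hξ : 0 < ξ)
    (A : Matrix (Fin t) (Fin h) ℝ) (H : Matrix (Fin t) (Fin d) ℝ)
    (θ : Matrix (Fin h) (Fin d) ℝ)
    (S : Matrix (Fin d) (Fin d) ℝ) (hS : S.PosDef) :
    Real.sqrt (vecCol ((Aᵀ * A + ξ • (1 : Matrix (Fin h) (Fin h) ℝ))⁻¹ * (Aᵀ * (A * θ + H)) - θ)
        ⬝ᵥ (S⁻¹ ⊗ₖ (Aᵀ * A + ξ • (1 : Matrix (Fin h) (Fin h) ℝ))).mulVec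
          (vecCol ((Aᵀ * A + ξ • (1 : Matrix (Fin h) (Fin h) ℝ))⁻¹ * (Aᵀ * (A * θ + H)) - θ)))
      ≤ ξ * Real.sqrt (vecCol θ ⬝ᵥ (S⁻¹ ⊗ₖ (Aᵀ * A + ξ • (1 : Matrix (Fin h) (Fin h) ℝ))⁻¹).mulVec (vecCol θ))
        + Real.sqrt (vecCol (Aᵀ * H) ⬝ᵥ (S⁻¹ ⊗ₖ (Aᵀ * A + ξ • (1 : Matrix (Fin h) (Fin h) ℝ))⁻¹).mulVec (vecCol (Aᵀ * H))) := by
  set W : Matrix (Fin h) (Fin h) ℝ := Aᵀ * A + ξ • (1 : Matrix (Fin h) (Fin h) ℝ) with hWdef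
  have hW : W.PosDef := by
    refine Matrix.PosDef.of_dotProduct_mulVec_pos ?_ ?_
    · rw [Matrix.IsHermitian, conjTranspose_eq_transpose_of_trivial]
      simp [hWdef, Matrix.transpose_add, Matrix.transpose_mul, Matrix.transpose_smul]
    · intro x hx
      have h1 : x ⬝ᵥ (Aᵀ * A) *ᵥ x = (A *ᵥ x) ⬝ᵥ (A *ᵥ x) := by
        rw [← Matrix.mulVec_mulVec, Matrix.dotProduct_mulVec, Matrix.vecMul_transpose]
      have h2 : (0:ℝ) < x ⬝ᵥ x := by
        have := Matrix.dotProduct_star_self_pos_iff (v := x) |>.mpr hx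
        simpa using this
      have : x ⬝ᵥ W *ᵥ x = (A *ᵥ x) ⬝ᵥ (A *ᵥ x) + ξ * (x ⬝ᵥ x) := by
        rw [hWdef, Matrix.add_mulVec, dotProduct_add, h1, Matrix.smul_mulVec,
          Matrix.one_mulVec, dotProduct_smul, smul_eq_mul]
      simp only [star_trivial]
      rw [this]
      have hnn : (0:ℝ) ≤ (A *ᵥ x) ⬝ᵥ (A *ᵥ x) := by
        simpa [dotProduct] using Finset.sum_nonneg fun i _ => mul_self_nonneg ((A *ᵥ x) i)
      exact add_pos_of_nonneg_of_pos hnn (mul_pos hξ h2)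
  have hWdet : IsUnit W.det := hW.det_pos.ne'.isUnit
  have hWs : Wᵀ = W := by
    have := hW.isHermitian
    rwa [Matrix.IsHermitian, conjTranspose_eq_transpose_of_trivial] at this
  have hWinv : (W⁻¹)ᵀ = W⁻¹ := by rw [Matrix.transpose_nonsing_inv, hWs]
  have hPSD : (S⁻¹ ⊗ₖ W).PosSemidef := RidgeAux.psd_kron hS.inv.posSemidef hW.posSemidef
  have hdecomp : W⁻¹ * (Aᵀ * (A * θ + H)) - θ
      = (-ξ) • (W⁻¹ * θ) + W⁻¹ * (Aᵀ * H) := by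
    have hAA : Aᵀ * A = W - ξ • (1 : Matrix (Fin h) (Fin h) ℝ) := by
      rw [hWdef]; abel
    have hinvW : W⁻¹ * (W * θ) = θ := by
      rw [← Matrix.mul_assoc, Matrix.nonsing_inv_mul _ hWdet, Matrix.one_mul]
    calc W⁻¹ * (Aᵀ * (A * θ + H)) - θ
        = W⁻¹ * (Aᵀ * A * θ) + W⁻¹ * (Aᵀ * H) - θ := by
          simp [Matrix.mul_add, Matrix.mul_assoc]
      _ = W⁻¹ * (W * θ) - ξ • (W⁻¹ * θ) + W⁻¹ * (Aᵀ * H) - θ := by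
          rw [hAA, Matrix.sub_mul, Matrix.mul_sub, Matrix.smul_mul, Matrix.one_mul,
            Matrix.mul_smul]
      _ = (-ξ) • (W⁻¹ * θ) + W⁻¹ * (Aᵀ * H) := by
          rw [hinvW, neg_smul]; abel
  have hvec : vecCol (W⁻¹ * (Aᵀ * (A * θ + H)) - θ)
      = (-ξ) • vecCol (W⁻¹ * θ) + vecCol (W⁻¹ * (Aᵀ * H)) := by
    rw [hdecomp]; ext p; simp [vecCol]
  rw [hvec]
  have tri := RidgeAux.sqrt_qf_add_le hPSD ((-ξ) • vecCol (W⁻¹ * θ)) (vecCol (W⁻¹ * (Aᵀ * H)))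
  refine tri.trans ?_
  rw [RidgeAux.sqrt_qf_smul, abs_neg, abs_of_pos hξ,
    reweight S⁻¹ W hWdet hWinv θ, reweight S⁻¹ W hWdet hWinv (Aᵀ * H)]

/-- Self-normalized bound for the ridge estimator:
`‖vec(θ̂ − θ)‖_{Σ⁻¹⊗(V+ξI)} ≤ ξ‖vec(θ)‖_{Σ⁻¹⊗(V+ξI)⁻¹} + ‖S‖_{Σ⁻¹⊗(V+ξI)⁻¹}`
where `V = AᵀA`, `X = Aθ + H`, `θ̂ = (V+ξI)⁻¹AᵀX`, `S = vec(AᵀH)`. -/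
theorem ridge_self_normalized_bound (t h d : ℕ)
    (ξ : ℝ) (hξ : 0 < ξ)
    (A : Matrix (Fin t) (Fin h) ℝ) (H : Matrix (Fin t) (Fin d) ℝ)
    (θ : Matrix (Fin h) (Fin d) ℝ)
    (S : Matrix (Fin d) (Fin d) ℝ) (hS : S.PosDef) :
    let V : Matrix (Fin h) (Fin h) ℝ := Aᵀ * A
    let W : Matrix (Fin h) (Fin h) ℝ := V + ξ • (1 : Matrix (Fin h) (Fin h) ℝ)
    let X : Matrix (Fin t) (Fin d) ℝ := A * θ + H
    let θhat : Matrix (Fin h) (Fin d) ℝ := W⁻¹ * (Aᵀ * X)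
    let Svec : Fin d × Fin h → ℝ := vecCol (Aᵀ * H)
    Real.sqrt (vecCol (θhat - θ) ⬝ᵥ (S⁻¹ ⊗ₖ W).mulVec (vecCol (θhat - θ)))
      ≤ ξ * Real.sqrt (vecCol θ ⬝ᵥ (S⁻¹ ⊗ₖ W⁻¹).mulVec (vecCol θ))
        + Real.sqrt (Svec ⬝ᵥ (S⁻¹ ⊗ₖ W⁻¹).mulVec Svec) := by
  exact main_bound t h d ξ hξ A H θ S hS
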